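/- Let G be a group containing ℂ* as a central subgroup, with a surjective homomorphism κ: G → K onto an abelian group K, ker κ = ℂ*. Let Δ ⊆ K be a finite subgroup. Then there exists a finite subgroup Δ̃ of G with κ(Δ̃) = Δ. (Explicitly, if d is the exponent of Δ, one can take Δ̃ = {γ·x̃ : γ ∈ μ_{d²}, x ∈ Δ} where each x̃ is a lift of x of the same order as x with (−x)~ = x̃⁻¹.) -/
import Mathlib

private lemma stmt14_shift {G : Type*} [Group G] {a b c : G}
    (hc : ∀ g : G, c * g = g * c) (h : b * a = c * (a * b)) :
    ∀ m : ℕ, b ^ m * a = c ^ m * (a * b ^ m) := by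
  intro m
  induction m with
  | zero => simp
  | succ m ih =>
    calc b ^ (m + 1) * a = b ^ m * (b * a) := by rw [pow_succ, mul_assoc]
      _ = b ^ m * (c * (a * b)) := by rw [h]
      _ = c * (b ^ m * a * b) := by
            rw [← mul_assoc, ← hc (b ^ m)]; simp only [mul_assoc]
      _ = c * (c ^ m * (a * b ^ m) * b) := by rw [ih]
      _ = c ^ (m + 1) * (a * b ^ (m + 1)) := by
            rw [pow_succ' c, pow_succ b]; simp only [mul_assoc]

private lemma stmt14_pow {G : Type*} [Group G] {a b c : G}
    (hc : ∀ g : G, c * g = g * c) (h : b * a = c * (a * b)) :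
    ∀ m : ℕ, ∃ e : ℕ, (a * b) ^ m = c ^ e * (a ^ m * b ^ m) := by
  intro m
  induction m with
  | zero => exact ⟨0, by simp⟩
  | succ m ih =>
    obtain ⟨e, he⟩ := ih
    refine ⟨e + m, ?_⟩
    calc (a * b) ^ (m + 1) = c ^ e * (a ^ m * b ^ m) * (a * b) := by
          rw [pow_succ, he]
      _ = c ^ e * (a ^ m * (b ^ m * a) * b) := by simp only [mul_assoc]
      _ = c ^ e * (a ^ m * (c ^ m * (a * b ^ m)) * b) := by
          rw [stmt14_shift hc h m]
      _ = c ^ e * (c ^ m * (a ^ m * (a * b ^ m) * b)) := by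
          have hcm : Commute (c ^ m) (a ^ m) := (show Commute c a from hc a).pow_pow m m
          rw [← mul_assoc (a ^ m), ← hcm.eq]; simp only [mul_assoc]
      _ = c ^ (e + m) * (a ^ (m + 1) * b ^ (m + 1)) := by
          rw [pow_add, pow_succ a, pow_succ b]
          simp only [mul_assoc]

/-- Let `G` be a group containing `ℂ*` as a central subgroup, with a surjective
homomorphism `κ : G → K` onto an abelian group `K` with `ker κ = ι.range`.  Then every
finite subgroup `Δ` of `K` lifts to a finite subgroup `Δ̃` of `G` with `κ(Δ̃) = Δ`. -/
theorem stmt14 {G K : Type*} [Group G] [CommGroup K]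
    (ι : ℂˣ →* G) (hι : Function.Injective ι)
    (hcent : ∀ c : ℂˣ, ι c ∈ Subgroup.center G)
    (κ : G →* K) (hκ : Function.Surjective κ)
    (hker : κ.ker = ι.range)
    (Δ : Subgroup K) (hΔ : (Δ : Set K).Finite) :
    ∃ Δ' : Subgroup G, (Δ' : Set G).Finite ∧ Subgroup.map κ Δ' = Δ := by
  classical
  have hfin : Finite ↥Δ := hΔ.to_subtype
  set n := Nat.card ↥Δ with hn
  have hnpos : 0 < n := Nat.card_pos
  have hne : NeZero (n * n) := ⟨by positivity⟩
  -- every element of Δ has order dividing n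
  have hpow : ∀ x : ↥Δ, (x : K) ^ n = 1 := by
    intro x
    have h : x ^ n = 1 := pow_card_eq_one'
    have h2 := congrArg (Subgroup.subtype Δ) h
    rw [map_pow, map_one] at h2
    exact h2
  -- elements of the range of ι are central
  have hcom : ∀ c : ℂˣ, ∀ g : G, ι c * g = g * ι c := fun c g =>
    (Subgroup.mem_center_iff.mp (hcent c) g).symm
  have hκι : ∀ c : ℂˣ, κ (ι c) = 1 := by
    intro c
    have : ι c ∈ κ.ker := hker ▸ ⟨c, rfl⟩
    exact this
  have hmem : ∀ g : G, κ g = 1 → ∃ c : ℂˣ, ι c = g := by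
    intro g hg
    have : g ∈ ι.range := hker ▸ hg
    exact this
  -- n-th roots exist in ℂˣ
  have hroot : ∀ c : ℂˣ, ∃ ζ : ℂˣ, ζ ^ n = c := by
    intro c
    obtain ⟨z, hz⟩ := IsAlgClosed.exists_pow_nat_eq (k := ℂ) (c : ℂ) hnpos
    have hz0 : z ≠ 0 := by
      intro h0
      apply c.ne_zero
      rw [← hz, h0, zero_pow hnpos.ne']
    refine ⟨Units.mk0 z hz0, Units.ext ?_⟩
    simpa using hz
  -- lifts of elements of Δ of order dividing n
  have hlift : ∀ x : ↥Δ, ∃ g : G, κ g = (x : K) ∧ g ^ n = 1 := by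
    intro x
    obtain ⟨g, hg⟩ := hκ (x : K)
    have h1 : κ (g ^ n) = 1 := by rw [map_pow, hg, hpow x]
    obtain ⟨c, hc⟩ := hmem _ h1
    obtain ⟨ζ, hζ⟩ := hroot c⁻¹
    refine ⟨g * ι ζ, by rw [map_mul, hg, hκι, mul_one], ?_⟩
    have hcm : Commute g (ι ζ) := (hcom ζ g).symm
    rw [hcm.mul_pow, ← map_pow, hζ, ← hc, ← map_mul, mul_inv_cancel, map_one]
  choose L hL1 hL2 using hlift
  -- the candidate subgroup
  let P : G → Prop := fun g => ∃ (γ : ℂˣ) (x : ↥Δ), γ ^ (n * n) = 1 ∧ g = ι γ * L x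
  -- key: L x * L y differs from L (x*y) by an (n*n)-th root of unity
  have hmul : ∀ x y : ↥Δ, ∃ ε : ℂˣ, ε ^ (n * n) = 1 ∧ L x * L y = ι ε * L (x * y) := by
    intro x y
    have h1 : κ (L x * L y * (L (x * y))⁻¹) = 1 := by
      rw [map_mul, map_mul, map_inv, hL1, hL1, hL1]
      push_cast
      rw [mul_inv_cancel]
    obtain ⟨ε, hε⟩ := hmem _ h1
    have heq : L x * L y = ι ε * L (x * y) := by
      rw [hε, inv_mul_cancel_right]
    -- commutator of L y and L x
    have h2 : κ (L y * L x * (L y)⁻¹ * (L x)⁻¹) = 1 := by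
      simp only [map_mul, map_inv, hL1]
      rw [mul_comm ((y : K)) ((x : K))]
      group
    obtain ⟨c, hc⟩ := hmem _ h2
    have hcc : ∀ g : G, ι c * g = g * ι c := hcom c
    have hba : L y * L x = ι c * (L x * L y) := by
      rw [hc]
      group
    -- c ^ n = 1
    have hcn : ι c ^ n = 1 := by
      have h3 := stmt14_shift hcc hba n
      rw [hL2 y, one_mul, mul_one] at h3
      have h4 : ι c ^ n * L x = 1 * L x := by rw [one_mul]; exact h3.symm
      exact mul_right_cancel h4
    obtain ⟨e, he⟩ := stmt14_pow hcc hba n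
    rw [hL2 x, hL2 y, one_mul, mul_one] at he
    -- he : (L x * L y) ^ n = ι c ^ e
    have hεn : ι (ε ^ (n * n)) = 1 := by
      have h4 : (L x * L y) ^ n = ι ε ^ n * (L (x * y)) ^ n := by
        rw [heq]
        exact (Commute.mul_pow (by exact (hcom ε (L (x * y))))) n
      rw [hL2, mul_one] at h4
      have h5 : ι ε ^ n = ι c ^ e := by rw [← h4, he]
      calc ι (ε ^ (n * n)) = (ι ε ^ n) ^ n := by rw [map_pow, pow_mul]
        _ = (ι c ^ e) ^ n := by rw [h5]
        _ = (ι c ^ n) ^ e := by rw [← pow_mul, mul_comm, pow_mul]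
        _ = 1 := by rw [hcn, one_pow]
    refine ⟨ε, hι ?_, heq⟩
    rw [map_one, map_pow]
    rw [map_pow] at hεn
    exact hεn
  have hinv : ∀ x : ↥Δ, ∃ η : ℂˣ, η ^ (n * n) = 1 ∧ (L x)⁻¹ = ι η * L x⁻¹ := by
    intro x
    have h1 : κ ((L x)⁻¹ * (L x⁻¹)⁻¹) = 1 := by
      rw [map_mul, map_inv, map_inv, hL1, hL1]
      push_cast
      group
    obtain ⟨η, hη⟩ := hmem _ h1
    have heq : (L x)⁻¹ = ι η * L x⁻¹ := by rw [hη, inv_mul_cancel_right]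
    have hηn : ι (η ^ n) = 1 := by
      have h2 : ((L x)⁻¹) ^ n = ι η ^ n * (L x⁻¹) ^ n := by
        rw [heq]
        exact (Commute.mul_pow (hcom η (L x⁻¹))) n
      rw [hL2, mul_one, inv_pow, hL2, inv_one] at h2
      rw [map_pow, ← h2]
    have : η ^ n = 1 := hι (by rw [hηn, map_one])
    exact ⟨η, by rw [pow_mul, this, one_pow], heq⟩
  let Δ' : Subgroup G :=
    { carrier := {g | P g}
      one_mem' := by
        have h1 : κ ((L 1)⁻¹) = 1 := by rw [map_inv, hL1]; simp
        obtain ⟨μ, hμ⟩ := hmem _ h1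
        have hμn : μ ^ n = 1 := by
          apply hι
          rw [map_pow, hμ, inv_pow, hL2, inv_one, map_one]
        exact ⟨μ, 1, by rw [pow_mul, hμn, one_pow], by rw [hμ, inv_mul_cancel]⟩
      mul_mem' := by
        rintro g h ⟨γ, x, hγ, rfl⟩ ⟨δ, y, hδ, rfl⟩
        obtain ⟨ε, hε, heq⟩ := hmul x y
        refine ⟨γ * δ * ε, x * y, by rw [mul_pow, mul_pow, hγ, hδ, hε, one_mul, one_mul], ?_⟩
        calc ι γ * L x * (ι δ * L y) = ι γ * (ι δ * (L x * L y)) := by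
              rw [mul_assoc, ← mul_assoc (L x), ← hcom δ (L x)]
              simp only [mul_assoc]
          _ = ι γ * (ι δ * (ι ε * L (x * y))) := by rw [heq]
          _ = ι (γ * δ * ε) * L (x * y) := by
              rw [map_mul, map_mul]
              simp only [mul_assoc]
      inv_mem' := by
        rintro g ⟨γ, x, hγ, rfl⟩
        obtain ⟨η, hη, heq⟩ := hinv x
        refine ⟨γ⁻¹ * η, x⁻¹, by rw [mul_pow, hη, inv_pow, hγ, inv_one, one_mul], ?_⟩
        rw [mul_inv_rev, heq, ← map_inv ι γ, ← hcom γ⁻¹ (ι η * L x⁻¹), map_mul, map_inv]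
        simp only [mul_assoc]
      }
  refine ⟨Δ', ?_, ?_⟩
  · -- finiteness
    have hsub : (Δ' : Set G) ⊆
        (fun p : (rootsOfUnity (n * n) ℂ) × ↥Δ => ι (p.1 : ℂˣ) * L p.2) '' Set.univ := by
      rintro g ⟨γ, x, hγ, rfl⟩
      exact ⟨(⟨γ, (mem_rootsOfUnity _ _).mpr hγ⟩, x), Set.mem_univ _, rfl⟩
    exact Set.Finite.subset (Set.toFinite _) hsub
  · -- image equality
    ext y
    simp only [Subgroup.mem_map]
    constructor
    · rintro ⟨g, ⟨γ, x, hγ, rfl⟩, rfl⟩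
      rw [map_mul, hκι, one_mul, hL1]
      exact x.2
    · intro hy
      exact ⟨L ⟨y, hy⟩, ⟨1, ⟨y, hy⟩, one_pow _, by rw [map_one, one_mul]⟩, hL1 _⟩
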